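/- There is no universal extended spiking neural P system without delay that has only 2 neurons, even with generalised input and generalised output. -/

import Mathlib

open scoped Classical

namespace PaperSNP

/-- A firing rule `E / s^b → s^p` over the unary spike alphabet. -/
structure FireRule where
  E : RegularExpression Unit
  b : ℕ
  p : ℕ

/-- The word consisting of `n` spikes. -/
def spk (n : ℕ) : List Unit := List.replicate n ()

/-- An (extended) spiking neural P system without delay, with `m` neurons.
Neuron `i` initially holds `init i` spikes, has firing rules `fire i` and
forgetting rules `forget i` (a forgetting rule is given by the number `e`
of spikes it removes). -/
structure SNP (m : ℕ) where
  syn : Finset (Fin m × Fin m)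
  inp : Fin m
  out : Fin m
  init : Fin m → ℕ
  fire : Fin m → Set FireRule
  forget : Fin m → Set ℕ

/-- Well-formedness: synapses join distinct neurons, rule sets are finite,
every firing rule `E/s^b → s^p` has `b ≥ p ≥ 1`, and every forgetting rule
`s^e → λ` has `e ≥ 1` with `s^e ∉ L(E)` for each firing rule of the neuron. -/
def SNP.WF {m : ℕ} (P : SNP m) : Prop :=
  (∀ e ∈ P.syn, e.1 ≠ e.2) ∧
  (∀ i, (P.fire i).Finite) ∧ (∀ i, (P.forget i).Finite) ∧
  (∀ i, ∀ r ∈ P.fire i, 1 ≤ r.p ∧ r.p ≤ r.b) ∧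
  (∀ i, ∀ e ∈ P.forget i, 1 ≤ e ∧ ∀ r ∈ P.fire i, spk e ∉ r.E.matches')

/-- A standard system: every firing rule emits exactly one spike. -/
def SNP.Standard {m : ℕ} (P : SNP m) : Prop :=
  ∀ i, ∀ r ∈ P.fire i, r.p = 1

/-- A configuration: spike counts of the neurons and the unread input suffix. -/
structure Config (m : ℕ) where
  sp : Fin m → ℕ
  w : List Bool

/-- An action of a single neuron at a timestep: apply a firing rule,
apply a forgetting rule (removing `e` spikes), or do nothing. -/
abbrev Act := Option (FireRule ⊕ ℕ)

/-- Applicability of a firing rule in neuron `i` holding `c` spikes. -/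
def FireApp {m : ℕ} (P : SNP m) (i : Fin m) (r : FireRule) (c : ℕ) : Prop :=
  r ∈ P.fire i ∧ r.b ≤ c ∧ spk c ∈ r.E.matches'

/-- Applicability of a forgetting rule `s^e → λ` in neuron `i` holding `c` spikes. -/
def ForgetApp {m : ℕ} (P : SNP m) (i : Fin m) (e : ℕ) (c : ℕ) : Prop :=
  e ∈ P.forget i ∧ c = e

/-- An action is valid for neuron `i` holding `c` spikes: a rule may (and must)
be applied exactly when some rule is applicable. -/
def ActValid {m : ℕ} (P : SNP m) (i : Fin m) (c : ℕ) : Act → Prop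
  | none => (∀ r, ¬ FireApp P i r c) ∧ (∀ e, ¬ ForgetApp P i e c)
  | some (Sum.inl r) => FireApp P i r c
  | some (Sum.inr e) => ForgetApp P i e c

/-- Number of spikes consumed by an action. -/
def consumed : Act → ℕ
  | none => 0
  | some (Sum.inl r) => r.b
  | some (Sum.inr e) => e

/-- Number of spikes emitted along each outgoing synapse by an action. -/
def emitted : Act → ℕ
  | some (Sum.inl r) => r.p
  | some (Sum.inr _) => 0
  | none => 0

/-- Spikes received by neuron `i` from the other neurons, given the actions. -/
def received {m : ℕ} (P : SNP m) (a : Fin m → Act) (i : Fin m) : ℕ :=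
  ∑ j : Fin m, if (j, i) ∈ P.syn then emitted (a j) else 0

/-- The spike entering the input neuron from the environment (1 iff the
currently read input symbol is a 1). -/
def inputSpike {m : ℕ} (P : SNP m) (w : List Bool) (i : Fin m) : ℕ :=
  if i = P.inp ∧ w.head? = some true then 1 else 0

/-- One synchronous computation step of the system under actions `a`. -/
def SStep {m : ℕ} (P : SNP m) (a : Fin m → Act) (c c' : Config m) : Prop :=
  (∀ i, ActValid P i (c.sp i) (a i)) ∧
  (∀ i, c'.sp i = c.sp i - consumed (a i) + received P a i + inputSpike P c.w i) ∧
  c'.w = c.w.tail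

/-- Initial configuration on input word `w`. -/
def SNP.initConfig {m : ℕ} (P : SNP m) (w : List Bool) : Config m := ⟨P.init, w⟩

/-- A computation (run) of the system on input word `w`. -/
structure Run {m : ℕ} (P : SNP m) (w : List Bool) where
  cfg : ℕ → Config m
  act : ℕ → Fin m → Act
  init_eq : cfg 0 = P.initConfig w
  step : ∀ t, SStep P (act t) (cfg t) (cfg (t + 1))

/-- The output neuron fires at timestep `t` of the run. -/
def FiresAt {m : ℕ} {P : SNP m} {w : List Bool} (ρ : Run P w) (t : ℕ) : Prop :=
  ∃ r : FireRule, ρ.act t P.out = some (Sum.inl r)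

/-- Exactly `x` spikes are sent out of the output neuron at timestep `t`. -/
def SendsAt {m : ℕ} {P : SNP m} {w : List Bool} (ρ : Run P w) (t x : ℕ) : Prop :=
  ∃ r : FireRule, ρ.act t P.out = some (Sum.inl r) ∧ r.p = x

/-- `t1 < t2` are the first two timesteps at which the event `F` happens and
`z = t2 - t1` (the output value). -/
def OutputIs (F : ℕ → Prop) (z : ℕ) : Prop :=
  ∃ t1 t2, t1 < t2 ∧ F t1 ∧ F t2 ∧ (∀ s, s < t2 → s ≠ t1 → ¬ F s) ∧ z = t2 - t1

/-- As `OutputIs`, with moreover the second event occurring by timestep `T`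
(the whole computation takes at most `T` timesteps). -/
def OutWithin (F : ℕ → Prop) (z T : ℕ) : Prop :=
  ∃ t1 t2, t1 < t2 ∧ F t1 ∧ F t2 ∧ (∀ s, s < t2 → s ≠ t1 → ¬ F s) ∧ z = t2 - t1 ∧ t2 ≤ T

/-- The system outputs `z` on input `w` (standard output convention: `z` is the
number of timesteps between the first and second firings of the output neuron). -/
def Outputs {m : ℕ} (P : SNP m) (w : List Bool) (z : ℕ) : Prop :=
  ∃ ρ : Run P w, OutputIs (FiresAt ρ) z

/-- Generalised output with constant `x`: `z` is the number of timesteps between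
the first and second timesteps at which exactly `x` spikes leave the output neuron. -/
def GenOutputs {m : ℕ} (P : SNP m) (x : ℕ) (w : List Bool) (z : ℕ) : Prop :=
  ∃ ρ : Run P w, OutputIs (fun t => SendsAt ρ t x) z

/-- `phi x v`: the `x`-th partial recursive function of a fixed Gödel enumeration,
applied to the (encoded) tuple `v` of natural numbers. -/
def phi (x : ℕ) (v : List ℕ) : Part ℕ :=
  Nat.Partrec.Code.eval (Denumerable.ofNat Nat.Partrec.Code x) (Encodable.encode v)

/-- Universality of a system `P` with respect to an output convention `Out`:
there are recursive (computable) functions `f` and `g` such that for all `x` and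
all argument tuples `v`, `phi x v = f (P(g(x, v)))`, the two sides being defined
together. -/
def UniversalVia {m : ℕ} (P : SNP m) (Out : List Bool → ℕ → Prop) : Prop :=
  ∃ (f : ℕ → ℕ) (g : ℕ × List ℕ → List Bool),
    Computable f ∧ Computable g ∧
    ∀ (x : ℕ) (v : List ℕ),
      (∀ z, Out (g (x, v)) z → phi x v = Part.some (f z)) ∧
      ((phi x v).Dom → ∃ z, Out (g (x, v)) z)

/-- Universality with the standard output convention. -/
def Universal {m : ℕ} (P : SNP m) : Prop := UniversalVia P (Outputs P)





/-! ### Section 1: unary regular languages have primrec characteristic functions -/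

lemma unit_word (l : List Unit) : l = spk l.length :=
  List.eq_replicate_length.2 fun b _ => rfl

lemma spk_append (a b : ℕ) : spk (a + b) = spk a ++ spk b :=
  List.replicate_add a b ()

lemma foldr_or {α : Type*} (p : α → Bool) (l : List α) :
    l.foldr (fun k b => p k || b) false = true ↔ ∃ k ∈ l, p k = true := by
  induction l with
  | nil => simp
  | cons a l ih => simp [ih]

def valB (p : ℕ → Bool) (n : ℕ) (L : List Bool) : Bool :=
  decide (n = 0) || (List.range n).foldr (fun k b => (p (n - k) && L.getD k false) || b) false

def FLB (p : ℕ → Bool) : ℕ → List Bool :=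
  fun n => Nat.rec [] (fun m L => L ++ [valB p m L]) n

def starB (p : ℕ → Bool) (n : ℕ) : Bool := valB p n (FLB p n)

lemma FLB_eq (p : ℕ → Bool) (n : ℕ) : FLB p n = (List.range n).map (starB p) := by
  induction n with
  | zero => rfl
  | succ n ih =>
    show FLB p n ++ [valB p n (FLB p n)] = _
    rw [List.range_succ, List.map_append, ← ih]
    rfl

lemma FLB_getD (p : ℕ → Bool) {k n : ℕ} (h : k < n) :
    (FLB p n).getD k false = starB p k := by
  rw [FLB_eq, List.getD_eq_getElem?_getD, List.getElem?_map, List.getElem?_range h]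
  rfl

lemma starB_eq (p : ℕ → Bool) (n : ℕ) :
    starB p n = true ↔ (n = 0 ∨ ∃ k < n, p (n - k) = true ∧ starB p k = true) := by
  rw [starB, valB, Bool.or_eq_true, decide_eq_true_iff,
    foldr_or (fun k => p (n - k) && (FLB p n).getD k false)]
  constructor
  · rintro (h | ⟨k, hk, hpk⟩)
    · exact Or.inl h
    · rw [List.mem_range] at hk
      rw [FLB_getD p hk, Bool.and_eq_true] at hpk
      exact Or.inr ⟨k, hk, hpk⟩
  · rintro (h | ⟨k, hk, h1, h2⟩)
    · exact Or.inl h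
    · exact Or.inr ⟨k, List.mem_range.2 hk, by rw [FLB_getD p hk, Bool.and_eq_true]; exact ⟨h1, h2⟩⟩

lemma starB_primrec {p : ℕ → Bool} (hp : Primrec p) : Primrec (starB p) := by
  have hval : Primrec₂ (valB p) := by
    have h1 : Primrec fun a : ℕ × List Bool => decide (a.1 = 0) :=
      (Primrec.eq.comp Primrec.fst (Primrec.const 0)).decide
    have h2 : Primrec₂ fun (a : ℕ × List Bool) (q : ℕ × Bool) =>
        ((p (a.1 - q.1) && a.2.getD q.1 false) || q.2) :=
      Primrec.or.comp
        (Primrec.and.comp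
          (hp.comp (Primrec.nat_sub.comp (Primrec.fst.comp Primrec.fst)
            (Primrec.fst.comp Primrec.snd)))
          ((Primrec.list_getD false).comp (Primrec.snd.comp Primrec.fst)
            (Primrec.fst.comp Primrec.snd)))
        (Primrec.snd.comp Primrec.snd)
    have h3 : Primrec fun a : ℕ × List Bool =>
        (List.range a.1).foldr (fun k b => (p (a.1 - k) && a.2.getD k false) || b) false :=
      Primrec.list_foldr (Primrec.list_range.comp Primrec.fst) (Primrec.const false) h2
    exact (Primrec.or.comp h1 h3).to₂
  have hFL : Primrec (FLB p) := by
    have := Primrec.nat_rec' (f := fun n : ℕ => n) (g := fun _ : ℕ => ([] : List Bool))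
      (h := fun _ (q : ℕ × List Bool) => q.2 ++ [valB p q.1 q.2])
      Primrec.id (Primrec.const [])
      (Primrec.list_append.comp (Primrec.snd.comp Primrec.snd)
        (Primrec.list_cons.comp (hval.comp (Primrec.fst.comp Primrec.snd)
          (Primrec.snd.comp Primrec.snd)) (Primrec.const []))).to₂
    exact this
  exact hval.comp Primrec.id hFL

lemma spk_mem_mul {L M : Language Unit} {n : ℕ} :
    spk n ∈ L * M ↔ ∃ k ≤ n, spk k ∈ L ∧ spk (n - k) ∈ M := by
  rw [Language.mem_mul]
  constructor
  · rintro ⟨a, ha, b, hb, hab⟩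
    have hlen : a.length + b.length = n := by
      have := congrArg List.length hab; simpa [spk] using this
    refine ⟨a.length, by omega, ?_, ?_⟩
    · rwa [← unit_word]
    · have : b = spk (n - a.length) := by rw [unit_word b]; congr 1; omega
      rwa [← this]
  · rintro ⟨k, hk, h1, h2⟩
    exact ⟨spk k, h1, spk (n - k), h2, by rw [← spk_append]; congr 1; omega⟩

lemma spk_mem_kstar {L : Language Unit} {n : ℕ} :
    spk n ∈ KStar.kstar L ↔ (n = 0 ∨ ∃ j, 1 ≤ j ∧ j ≤ n ∧ spk j ∈ L ∧ spk (n - j) ∈ KStar.kstar L) := by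
  constructor
  · intro h
    rw [Language.mem_kstar_iff_exists_nonempty] at h
    obtain ⟨S, hS, hmem⟩ := h
    cases S with
    | nil =>
      left; have := congrArg List.length hS; simpa [spk] using this
    | cons y S' =>
      right
      have hy := hmem y (by simp)
      have hS' : ∀ z ∈ S', z ∈ L := fun z hz => (hmem z (by simp [hz])).1
      have hflat : spk n = y ++ S'.flatten := by simpa using hS
      have hlen : y.length + S'.flatten.length = n := by
        have := congrArg List.length hflat
        simp only [spk, List.length_replicate, List.length_append] at this; omega
      refine ⟨y.length, ?_, by omega, ?_, ?_⟩
      · cases y with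
        | nil => exact absurd rfl hy.2
        | cons _ _ => simp
      · rw [← unit_word]; exact hy.1
      · have : S'.flatten = spk (n - y.length) := by
          rw [unit_word S'.flatten]; congr 1; omega
        rw [← this]; exact Language.join_mem_kstar hS'
  · rintro (h | ⟨j, hj1, hjn, h1, h2⟩)
    · subst h; exact Language.nil_mem_kstar L
    · have : spk n ∈ L * KStar.kstar L := spk_mem_mul.2 ⟨j, hjn, h1, h2⟩
      rw [← Language.one_add_self_mul_kstar_eq_kstar]
      exact (Language.mem_add _ _ _).2 (Or.inr this)

theorem regex_charfun (E : RegularExpression Unit) :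
    ∃ f : ℕ → Bool, Primrec f ∧ ∀ n, (f n = true ↔ spk n ∈ E.matches') := by
  induction E with
  | zero =>
    exact ⟨fun _ => false, Primrec.const false, fun n => by
      simp [RegularExpression.matches'_zero, Language.notMem_zero]⟩
  | epsilon =>
    refine ⟨fun n => decide (n = 0), (Primrec.eq.comp Primrec.id (Primrec.const 0)).decide, fun n => ?_⟩
    simp [RegularExpression.matches'_epsilon, Language.mem_one, spk, List.replicate_eq_nil_iff]
  | char a =>
    refine ⟨fun n => decide (n = 1), (Primrec.eq.comp Primrec.id (Primrec.const 1)).decide, fun n => ?_⟩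
    rw [RegularExpression.matches'_char]
    simp only [decide_eq_true_iff, Set.mem_singleton_iff]
    constructor
    · rintro rfl; cases a; rfl
    · intro h; have := congrArg List.length h; simpa [spk] using this
  | plus P Q ihP ihQ =>
    obtain ⟨f, hf, hfs⟩ := ihP; obtain ⟨g, hg, hgs⟩ := ihQ
    refine ⟨fun n => f n || g n, Primrec.or.comp hf hg, fun n => ?_⟩
    have he : (P.plus Q).matches' = P.matches' + Q.matches' := rfl
    rw [he, Language.mem_add, Bool.or_eq_true, hfs, hgs]
  | comp P Q ihP ihQ =>
    obtain ⟨f, hf, hfs⟩ := ihP; obtain ⟨g, hg, hgs⟩ := ihQ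
    refine ⟨fun n => (List.range (n+1)).foldr (fun k b => (f k && g (n - k)) || b) false, ?_, ?_⟩
    · have hh : Primrec₂ fun (n : ℕ) (q : ℕ × Bool) => ((f q.1 && g (n - q.1)) || q.2) :=
        Primrec.or.comp
          (Primrec.and.comp (hf.comp (Primrec.fst.comp Primrec.snd))
            (hg.comp (Primrec.nat_sub.comp Primrec.fst (Primrec.fst.comp Primrec.snd))))
          (Primrec.snd.comp Primrec.snd)
      have h3 : Primrec fun n : ℕ =>
          (List.range (n+1)).foldr (fun k b => (f k && g (n - k)) || b) false :=
        Primrec.list_foldr (Primrec.list_range.comp Primrec.succ) (Primrec.const false) hh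
      exact h3
    · intro n
      have he : (P.comp Q).matches' = P.matches' * Q.matches' := rfl
      rw [he, foldr_or (fun k => f k && g (n - k)), spk_mem_mul]
      constructor
      · rintro ⟨k, hk, h⟩
        rw [Bool.and_eq_true, hfs, hgs] at h
        exact ⟨k, Nat.lt_succ_iff.1 (List.mem_range.1 hk), h.1, h.2⟩
      · rintro ⟨k, hk, h1, h2⟩
        refine ⟨k, List.mem_range.2 (by omega), ?_⟩
        rw [Bool.and_eq_true, hfs, hgs]; exact ⟨h1, h2⟩
  | star P ihP =>
    obtain ⟨f, hf, hfs⟩ := ihP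
    refine ⟨starB f, starB_primrec hf, fun n => ?_⟩
    rw [RegularExpression.matches'_star]
    induction n using Nat.strong_induction_on with
    | _ n ih =>
      rw [starB_eq, spk_mem_kstar]
      constructor
      · rintro (h | ⟨k, hk, h1, h2⟩)
        · exact Or.inl h
        · exact Or.inr ⟨n - k, by omega, by omega, (hfs _).1 h1,
            by rw [show n - (n - k) = k by omega]; exact (ih k hk).1 h2⟩
      · rintro (h | ⟨j, hj1, hjn, h1, h2⟩)
        · exact Or.inl h
        · refine Or.inr ⟨n - j, by omega, (hfs _).2 (by rw [show n - (n - j) = j by omega]; exact h1),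
            (ih (n - j) (by omega)).2 h2⟩


/-! ### Section 2: sequence semantics for 2-neuron systems -/

def bitOf (w : List Bool) (t : ℕ) : Bool := w.getD t false

lemma bitOf_true_lt {w : List Bool} {t : ℕ} (h : bitOf w t = true) : t < w.length := by
  by_contra hc
  rw [bitOf, List.getD_eq_default _ _ (by omega)] at h
  exact Bool.false_ne_true h

def nextSp (P : SNP 2) (a : Fin 2 → Act) (sp : Fin 2 → ℕ) (b : Bool) : Fin 2 → ℕ :=
  fun i => sp i - consumed (a i) + received P a i + (if i = P.inp ∧ b = true then 1 else 0)

def spSeq (P : SNP 2) (w : List Bool) (A : ℕ → Fin 2 → Act) : ℕ → Fin 2 → ℕ :=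
  fun t => Nat.rec P.init (fun u sp => nextSp P (A u) sp (bitOf w u)) t

lemma spSeq_zero (P : SNP 2) (w : List Bool) (A : ℕ → Fin 2 → Act) :
    spSeq P w A 0 = P.init := rfl

lemma spSeq_succ (P : SNP 2) (w : List Bool) (A : ℕ → Fin 2 → Act) (t : ℕ) :
    spSeq P w A (t + 1) = nextSp P (A t) (spSeq P w A t) (bitOf w t) := rfl

def ValidSeq (P : SNP 2) (w : List Bool) (A : ℕ → Fin 2 → Act) : Prop :=
  ∀ t i, ActValid P i (spSeq P w A t i) (A t i)

lemma inputSpike_eq (P : SNP 2) (w : List Bool) (t : ℕ) (i : Fin 2) :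
    inputSpike P (w.drop t) i = if i = P.inp ∧ bitOf w t = true then 1 else 0 := by
  have hh : ((w.drop t).head? = some true) ↔ (bitOf w t = true) := by
    rw [List.head?_drop, bitOf, List.getD_eq_getElem?_getD]
    cases h : w[t]? with
    | none => simp
    | some b => simp
  exact if_congr (and_congr_right fun _ => hh) rfl rfl

lemma Config.ext' {c c' : Config 2} (h1 : c.sp = c'.sp) (h2 : c.w = c'.w) : c = c' := by
  cases c; cases c'; cases h1; cases h2; rfl

lemma run_cfg {P : SNP 2} {w : List Bool} (ρ : Run P w) :
    ∀ t, ρ.cfg t = ⟨spSeq P w ρ.act t, w.drop t⟩ := by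
  intro t
  induction t with
  | zero => rw [ρ.init_eq]; exact Config.ext' rfl (List.drop_zero (l := w)).symm
  | succ t ih =>
    obtain ⟨hval, hsp, hw⟩ := ρ.step t
    refine Config.ext' (funext fun i => ?_) ?_
    · rw [hsp i, ih]
      show _ = nextSp P (ρ.act t) (spSeq P w ρ.act t) (bitOf w t) i
      rw [nextSp, ← inputSpike_eq]
    · rw [hw, ih]
      show (w.drop t).tail = w.drop (t + 1)
      rw [List.tail_drop]

lemma run_valid {P : SNP 2} {w : List Bool} (ρ : Run P w) : ValidSeq P w ρ.act := by
  intro t i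
  have := (ρ.step t).1 i
  rwa [run_cfg ρ t] at this

lemma seq_run {P : SNP 2} {w : List Bool} {A : ℕ → Fin 2 → Act} (h : ValidSeq P w A) :
    ∃ ρ : Run P w, ρ.act = A := by
  refine ⟨⟨fun t => ⟨spSeq P w A t, w.drop t⟩, A,
    Config.ext' rfl (List.drop_zero (l := w)), fun t => ⟨h t, fun i => ?_, ?_⟩⟩, rfl⟩
  · show spSeq P w A (t+1) i = _
    rw [spSeq_succ, nextSp, inputSpike_eq]
  · show w.drop (t+1) = (w.drop t).tail
    rw [List.tail_drop]

lemma spSeq_congr {P : SNP 2} {w : List Bool} {A A' : ℕ → Fin 2 → Act} :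
    ∀ {t : ℕ}, (∀ u < t, A u = A' u) → spSeq P w A t = spSeq P w A' t := by
  intro t
  induction t with
  | zero => intro _; rfl
  | succ t ih =>
    intro h
    rw [spSeq_succ, spSeq_succ, ih (fun u hu => h u (by omega)), h t (by omega)]

noncomputable def defAct (P : SNP 2) (c : ℕ) (i : Fin 2) : Act :=
  if h : ∃ r, FireApp P i r c then some (Sum.inl h.choose)
  else if h2 : ∃ e, ForgetApp P i e c then some (Sum.inr h2.choose)
  else none

lemma defAct_valid (P : SNP 2) (c : ℕ) (i : Fin 2) : ActValid P i c (defAct P c i) := by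
  rw [defAct]
  split_ifs with h h2
  · exact h.choose_spec
  · exact h2.choose_spec
  · exact ⟨fun r hr => h ⟨r, hr⟩, fun e he => h2 ⟨e, he⟩⟩

noncomputable def extSp (P : SNP 2) (w : List Bool) (A₀ : ℕ → Fin 2 → Act) (t0 : ℕ) :
    ℕ → Fin 2 → ℕ :=
  fun t => Nat.rec P.init (fun u sp =>
    nextSp P (if u < t0 then A₀ u else fun i => defAct P (sp i) i) sp (bitOf w u)) t

noncomputable def extA (P : SNP 2) (w : List Bool) (A₀ : ℕ → Fin 2 → Act) (t0 : ℕ) :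
    ℕ → Fin 2 → Act :=
  fun t => if t < t0 then A₀ t else fun i => defAct P (extSp P w A₀ t0 t i) i

lemma extSp_eq (P : SNP 2) (w : List Bool) (A₀ : ℕ → Fin 2 → Act) (t0 : ℕ) :
    ∀ t, spSeq P w (extA P w A₀ t0) t = extSp P w A₀ t0 t := by
  intro t
  induction t with
  | zero => rfl
  | succ t ih =>
    rw [spSeq_succ, ih]
    rfl

lemma extend_valid (P : SNP 2) (w : List Bool) (A₀ : ℕ → Fin 2 → Act) (t0 : ℕ)
    (h : ∀ t < t0, ∀ i, ActValid P i (spSeq P w A₀ t i) (A₀ t i)) :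
    ∃ A, ValidSeq P w A ∧ ∀ t < t0, A t = A₀ t := by
  refine ⟨extA P w A₀ t0, fun t i => ?_, fun t ht => if_pos ht⟩
  rw [extSp_eq]
  by_cases ht : t < t0
  · have hA : extA P w A₀ t0 t = A₀ t := if_pos ht
    have hsp : spSeq P w (extA P w A₀ t0) t = spSeq P w A₀ t :=
      spSeq_congr (fun u hu => if_pos (by omega))
    rw [hA, ← extSp_eq, hsp]
    exact h t ht i
  · have hA : extA P w A₀ t0 t = fun i => defAct P (extSp P w A₀ t0 t i) i := if_neg ht
    rw [hA]
    exact defAct_valid P _ i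

/-! spike-sum bound -/

def Nb (P : SNP 2) (w : List Bool) : ℕ := P.init 0 + P.init 1 + w.length

lemma consumed_le {P : SNP 2} {i : Fin 2} {c : ℕ} {a : Act} (h : ActValid P i c a) :
    consumed a ≤ c := by
  match a with
  | none => exact Nat.zero_le c
  | some (Sum.inl r) => exact h.2.1
  | some (Sum.inr e) => exact le_of_eq h.2.symm

lemma emitted_le {P : SNP 2} (hWF : P.WF) {i : Fin 2} {c : ℕ} {a : Act}
    (h : ActValid P i c a) : emitted a ≤ consumed a := by
  match a with
  | none => exact le_refl 0
  | some (Sum.inl r) => exact (hWF.2.2.2.1 i r h.1).2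
  | some (Sum.inr e) => exact Nat.zero_le e

lemma received_eq {P : SNP 2} (hWF : P.WF) (a : Fin 2 → Act) :
    received P a 0 = (if ((1 : Fin 2), (0 : Fin 2)) ∈ P.syn then emitted (a 1) else 0) ∧
    received P a 1 = (if ((0 : Fin 2), (1 : Fin 2)) ∈ P.syn then emitted (a 0) else 0) := by
  have h00 : ((0 : Fin 2), (0 : Fin 2)) ∉ P.syn := fun hc => (hWF.1 _ hc) rfl
  have h11 : ((1 : Fin 2), (1 : Fin 2)) ∉ P.syn := fun hc => (hWF.1 _ hc) rfl
  constructor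
  · rw [received, Fin.sum_univ_two, if_neg h00]; omega
  · rw [received, Fin.sum_univ_two, if_neg h11]; omega

lemma sum_bound {P : SNP 2} (hWF : P.WF) {w : List Bool} {A : ℕ → Fin 2 → Act}
    (h : ValidSeq P w A) : ∀ t, spSeq P w A t 0 + spSeq P w A t 1 ≤ Nb P w := by
  have key : ∀ t, spSeq P w A t 0 + spSeq P w A t 1 ≤
      P.init 0 + P.init 1 + min t w.length := by
    intro t
    induction t with
    | zero => simp [spSeq_zero]
    | succ t ih =>
      have h0 := h t 0
      have h1 := h t 1
      have hc0 := consumed_le h0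
      have hc1 := consumed_le h1
      have he0 := emitted_le hWF h0
      have he1 := emitted_le hWF h1
      obtain ⟨hr0, hr1⟩ := received_eq hWF (A t)
      have hrecv : received P (A t) 0 + received P (A t) 1 ≤
          consumed (A t 0) + consumed (A t 1) := by
        rw [hr0, hr1]
        split_ifs <;> omega
      have hne : ¬((0 : Fin 2) = P.inp ∧ (1 : Fin 2) = P.inp) := fun hc =>
        absurd (hc.1.trans hc.2.symm) (by decide)
      have hinp : (if (0 : Fin 2) = P.inp ∧ bitOf w t = true then 1 else 0) +
          (if (1 : Fin 2) = P.inp ∧ bitOf w t = true then 1 else 0) ≤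
          (if bitOf w t = true then 1 else 0) := by
        by_cases h0 : (0 : Fin 2) = P.inp ∧ bitOf w t = true
        · rw [if_pos h0, if_neg (fun hc => hne ⟨h0.1, hc.1⟩), if_pos h0.2]
        · rw [if_neg h0]
          by_cases h1 : (1 : Fin 2) = P.inp ∧ bitOf w t = true
          · rw [if_pos h1, if_pos h1.2]
          · rw [if_neg h1]
            split_ifs <;> omega
      have hstep : spSeq P w A (t+1) 0 + spSeq P w A (t+1) 1 ≤
          spSeq P w A t 0 + spSeq P w A t 1 + (if bitOf w t = true then 1 else 0) := by
        rw [spSeq_succ]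
        show spSeq P w A t 0 - consumed (A t 0) + received P (A t) 0 + _ +
          (spSeq P w A t 1 - consumed (A t 1) + received P (A t) 1 + _) ≤ _
        omega
      by_cases hb : bitOf w t = true
      · have hlen := bitOf_true_lt hb
        rw [if_pos hb] at hstep
        omega
      · rw [if_neg hb] at hstep
        omega
  intro t
  have := key t
  rw [Nb]
  omega

/-! fire counting -/

def XF (P : SNP 2) (x : ℕ) (A : ℕ → Fin 2 → Act) (u : ℕ) : Prop :=
  ∃ r : FireRule, A u P.out = some (Sum.inl r) ∧ r.p = x

noncomputable def cntX (P : SNP 2) (x : ℕ) (A : ℕ → Fin 2 → Act) : ℕ → ℕ :=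
  fun t => Nat.rec 0 (fun u c => c + if XF P x A u then 1 else 0) t

lemma cntX_succ (P : SNP 2) (x : ℕ) (A : ℕ → Fin 2 → Act) (t : ℕ) :
    cntX P x A (t + 1) = cntX P x A t + if XF P x A t then 1 else 0 := rfl

lemma cntX_mono (P : SNP 2) (x : ℕ) (A : ℕ → Fin 2 → Act) {u v : ℕ} (h : u ≤ v) :
    cntX P x A u ≤ cntX P x A v := by
  induction v, h using Nat.le_induction with
  | base => exact le_refl _
  | succ v hv ih =>
    rw [cntX_succ]
    omega

lemma cntX_fire (P : SNP 2) (x : ℕ) (A : ℕ → Fin 2 → Act) {u : ℕ} (h : XF P x A u) :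
    cntX P x A u + 1 ≤ cntX P x A (u + 1) := by
  rw [cntX_succ, if_pos h]

lemma cntX_one (P : SNP 2) (x : ℕ) (A : ℕ → Fin 2 → Act) {t : ℕ}
    (h : 1 ≤ cntX P x A t) : ∃ u, u < t ∧ XF P x A u := by
  induction t with
  | zero => simp [cntX] at h
  | succ t ih =>
    by_cases hx : XF P x A t
    · exact ⟨t, by omega, hx⟩
    · rw [cntX_succ, if_neg hx] at h
      obtain ⟨u, hu, hxu⟩ := ih h
      exact ⟨u, by omega, hxu⟩

lemma cntX_two (P : SNP 2) (x : ℕ) (A : ℕ → Fin 2 → Act) {t : ℕ}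
    (h : 2 ≤ cntX P x A t) : ∃ u1 u2, u1 < u2 ∧ u2 < t ∧ XF P x A u1 ∧ XF P x A u2 := by
  induction t with
  | zero => simp [cntX] at h
  | succ t ih =>
    by_cases hx : XF P x A t
    · rw [cntX_succ, if_pos hx] at h
      rcases Nat.lt_or_ge (cntX P x A t) 1 with h1 | h1
      · omega
      · obtain ⟨u, hu, hxu⟩ := cntX_one P x A h1
        exact ⟨u, t, hu, by omega, hxu, hx⟩
    · rw [cntX_succ, if_neg hx] at h
      obtain ⟨u1, u2, h12, h2t, hx1, hx2⟩ := ih h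
      exact ⟨u1, u2, h12, by omega, hx1, hx2⟩

lemma cntX_ge_two (P : SNP 2) (x : ℕ) (A : ℕ → Fin 2 → Act) {t1 t2 : ℕ}
    (h12 : t1 < t2) (h1 : XF P x A t1) (h2 : XF P x A t2) : 2 ≤ cntX P x A (t2 + 1) := by
  have a1 := cntX_fire P x A h1
  have a2 := cntX_fire P x A h2
  have a3 := cntX_mono P x A (show t1 + 1 ≤ t2 by omega)
  omega

lemma cntX_congr (P : SNP 2) (x : ℕ) {A A' : ℕ → Fin 2 → Act} :
    ∀ {t : ℕ}, (∀ u < t, A u = A' u) → cntX P x A t = cntX P x A' t := by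
  intro t
  induction t with
  | zero => intro _; rfl
  | succ t ih =>
    intro h
    rw [cntX_succ, cntX_succ, ih (fun u hu => h u (by omega))]
    have : XF P x A t ↔ XF P x A' t := by rw [XF, XF, h t (by omega)]
    rw [if_congr this rfl rfl]

lemma cntX_no_fire (P : SNP 2) (x : ℕ) (A : ℕ → Fin 2 → Act) {u u' : ℕ}
    (hle : u ≤ u') (heq : cntX P x A u = cntX P x A u') :
    ∀ v, u ≤ v → v < u' → ¬ XF P x A v := by
  intro v hv1 hv2 hx
  have a1 := cntX_mono P x A hv1
  have a2 := cntX_fire P x A hx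
  have a3 := cntX_mono P x A (show v + 1 ≤ u' by omega)
  omega

/-! ### Section 3: cutting and pumping -/

lemma cntX_zero (P : SNP 2) (x : ℕ) (A : ℕ → Fin 2 → Act) :
    ∀ {t : ℕ}, (∀ u < t, ¬ XF P x A u) → cntX P x A t = 0 := by
  intro t
  induction t with
  | zero => intro _; rfl
  | succ t ih =>
    intro h
    rw [cntX_succ, if_neg (h t (by omega)), ih (fun u hu => h u (by omega))]

lemma XF_congr {P : SNP 2} {x : ℕ} {A A' : ℕ → Fin 2 → Act} {t : ℕ} (h : A t = A' t) :
    XF P x A t ↔ XF P x A' t := by rw [XF, XF, h]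

lemma XF_of_eq {P : SNP 2} {x : ℕ} {A A' : ℕ → Fin 2 → Act} {t t' : ℕ}
    (h : A' t' = A t) (hx : XF P x A t) : XF P x A' t' := by
  obtain ⟨r, hr, hp⟩ := hx
  exact ⟨r, by rw [h]; exact hr, hp⟩

def cutA (A : ℕ → Fin 2 → Act) (u δ : ℕ) : ℕ → Fin 2 → Act :=
  fun t => if t < u then A t else A (t + δ)

lemma cut_spec (P : SNP 2) (w : List Bool) {A : ℕ → Fin 2 → Act} (h : ValidSeq P w A)
    {u δ : ℕ} (hu : w.length ≤ u)
    (hsp : spSeq P w A u = spSeq P w A (u + δ)) :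
    ValidSeq P w (cutA A u δ) ∧
    (∀ t, t ≤ u → spSeq P w (cutA A u δ) t = spSeq P w A t) ∧
    (∀ t, u ≤ t → spSeq P w (cutA A u δ) t = spSeq P w A (t + δ)) := by
  have part1 : ∀ t, t ≤ u → spSeq P w (cutA A u δ) t = spSeq P w A t := by
    intro t ht
    exact spSeq_congr (fun v hv => if_pos (by omega))
  have part2 : ∀ t, u ≤ t → spSeq P w (cutA A u δ) t = spSeq P w A (t + δ) := by
    intro t
    induction t with
    | zero =>
      intro h0
      have hu0 : u = 0 := by omega
      subst hu0
      rw [part1 0 (le_refl 0)]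
      exact hsp
    | succ t ih =>
      intro ht
      rcases Nat.lt_or_ge t u with hlt | hge
      · have huu : u = t + 1 := by omega
        subst huu
        rw [part1 (t+1) (le_refl _)]
        exact hsp
      · have hb : bitOf w t = false := by
          rw [bitOf, List.getD_eq_default _ _ (by omega)]
        have hb' : bitOf w (t + δ) = false := by
          rw [bitOf, List.getD_eq_default _ _ (by omega)]
        have hAt : cutA A u δ t = A (t + δ) := if_neg (by omega)
        rw [spSeq_succ, hAt, ih hge, hb]
        have he : t + 1 + δ = (t + δ) + 1 := by omega
        rw [he, spSeq_succ, hb']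
  refine ⟨fun t i => ?_, part1, part2⟩
  rcases Nat.lt_or_ge t u with hlt | hge
  · have hAt : cutA A u δ t = A t := if_pos hlt
    rw [hAt, part1 t (by omega)]
    exact h t i
  · have hAt : cutA A u δ t = A (t + δ) := if_neg (by omega)
    rw [hAt, part2 t hge]
    exact h (t + δ) i

def Tb (P : SNP 2) (w : List Bool) : ℕ := w.length + 2 * (Nb P w + 1) ^ 2

lemma pump (P : SNP 2) (x : ℕ) (hWF : P.WF) (w : List Bool) :
    ∀ n (A : ℕ → Fin 2 → Act), ValidSeq P w A → ∀ t1, XF P x A t1 → XF P x A n → t1 < n →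
    ∃ A', ValidSeq P w A' ∧ ∃ s1 s2, s1 < s2 ∧ s2 ≤ Tb P w ∧ XF P x A' s1 ∧ XF P x A' s2 := by
  intro n
  induction n using Nat.strong_induction_on with
  | _ n ih =>
    intro A hA t1 h1 h2 h12
    have hex1 : ∃ s, XF P x A s := ⟨t1, h1⟩
    have hs1 : XF P x A (Nat.find hex1) := Nat.find_spec hex1
    set s1 := Nat.find hex1 with hs1def
    have hs1min : ∀ v, v < s1 → ¬ XF P x A v := fun v hv => Nat.find_min hex1 hv
    have hs1le : s1 ≤ t1 := Nat.find_min' hex1 h1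
    have hex2 : ∃ s, XF P x A s ∧ s1 < s := ⟨n, h2, by omega⟩
    have hspec2 : XF P x A (Nat.find hex2) ∧ s1 < Nat.find hex2 := Nat.find_spec hex2
    set s2 := Nat.find hex2 with hs2def
    obtain ⟨hs2, hs12⟩ := hspec2
    have hs2min : ∀ v, v < s2 → ¬ (XF P x A v ∧ s1 < v) := fun v hv => Nat.find_min hex2 hv
    have hs2le : s2 ≤ n := Nat.find_min' hex2 ⟨h2, by omega⟩
    rcases Nat.lt_or_ge (Tb P w) s2 with hbig | hsmall
    · -- pigeonhole and cut
      have honefire : ∀ v, v < s2 → XF P x A v → v = s1 := by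
        intro v hv hxv
        rcases Nat.lt_trichotomy v s1 with h | h | h
        · exact absurd hxv (hs1min v h)
        · exact h
        · exact absurd ⟨hxv, h⟩ (hs2min v hv)
      have hcnt1 : ∀ v, v ≤ s2 → cntX P x A v ≤ 1 := by
        intro v hv
        induction v with
        | zero =>
          have hz0 := cntX_zero P x A (t := 0) (fun u hu => absurd hu (by omega))
          omega
        | succ v ihv =>
          rw [cntX_succ]
          by_cases hxv : XF P x A v
          · have hv1 : v = s1 := honefire v (by omega) hxv
            have hz : cntX P x A v = 0 := by
              rw [hv1]
              exact cntX_zero P x A (fun u hu => hs1min u hu)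
            rw [if_pos hxv]
            omega
          · rw [if_neg hxv]
            have := ihv (by omega)
            omega
      have hmaps : ∀ v ∈ Finset.Icc w.length s2,
          ((spSeq P w A v 0, spSeq P w A v 1), cntX P x A v) ∈
          (Finset.range (Nb P w + 1) ×ˢ Finset.range (Nb P w + 1)) ×ˢ Finset.range 2 := by
        intro v hv
        rw [Finset.mem_Icc] at hv
        have hsb := sum_bound hWF hA v
        refine Finset.mem_product.2 ⟨Finset.mem_product.2 ⟨?_, ?_⟩, ?_⟩ <;>
          rw [Finset.mem_range] <;> dsimp only
        · omega
        · omega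
        · have := hcnt1 v hv.2
          omega
      have hcard : ((Finset.range (Nb P w + 1) ×ˢ Finset.range (Nb P w + 1)) ×ˢ
          Finset.range 2).card < (Finset.Icc w.length s2).card := by
        simp only [Finset.card_product, Finset.card_range, Nat.card_Icc]
        rw [Tb, pow_two] at hbig
        omega
      obtain ⟨u, hu, u', hu', hne, heq⟩ :=
        Finset.exists_ne_map_eq_of_card_lt_of_maps_to hcard hmaps
      obtain ⟨a, b, hab, ha, hb, hEq⟩ :
          ∃ a b, a < b ∧ a ∈ Finset.Icc w.length s2 ∧ b ∈ Finset.Icc w.length s2 ∧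
            ((spSeq P w A a 0, spSeq P w A a 1), cntX P x A a) =
            ((spSeq P w A b 0, spSeq P w A b 1), cntX P x A b) := by
        rcases hne.lt_or_gt with hlt | hlt
        · exact ⟨u, u', hlt, hu, hu', heq⟩
        · exact ⟨u', u, hlt, hu', hu, heq.symm⟩
      rw [Finset.mem_Icc] at ha hb
      rw [Prod.mk.injEq, Prod.mk.injEq] at hEq
      obtain ⟨⟨hEq0, hEq1⟩, hEqc⟩ := hEq
      have hδ : 1 ≤ b - a := by omega
      have hfin2 : ∀ i : Fin 2, i = 0 ∨ i = 1 := by decide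
      have hspab : spSeq P w A a = spSeq P w A (a + (b - a)) := by
        have hba : a + (b - a) = b := by omega
        rw [hba]
        funext i
        rcases hfin2 i with hi | hi <;> rw [hi]
        · exact hEq0
        · exact hEq1
      obtain ⟨hvalid', hpart1, hpart2⟩ := cut_spec P w hA ha.1 hspab
      have hnofire : ∀ v, a ≤ v → v < b → ¬ XF P x A v :=
        cntX_no_fire P x A (by omega) hEqc
      have hs1pos : s1 < a ∨ b ≤ s1 := by
        by_contra hc
        push_neg at hc
        exact hnofire s1 hc.1 hc.2 hs1
      have hs2b : b ≤ s2 := hb.2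
      -- new firing times in the cut sequence
      have hxs2' : XF P x (cutA A a (b - a)) (s2 - (b - a)) := by
        have hge' : ¬ (s2 - (b - a) < a) := by omega
        have harg : s2 - (b - a) + (b - a) = s2 := by omega
        have hA' : cutA A a (b - a) (s2 - (b - a)) = A s2 := by
          simp only [cutA]
          rw [if_neg hge', harg]
        exact XF_of_eq hA' hs2
      have hs1'lt : ∃ s1', s1' < s2 - (b - a) ∧ XF P x (cutA A a (b - a)) s1' := by
        rcases hs1pos with hlt | hge
        · refine ⟨s1, by omega, ?_⟩
          have hA' : cutA A a (b - a) s1 = A s1 := if_pos hlt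
          exact XF_of_eq hA' hs1
        · refine ⟨s1 - (b - a), by omega, ?_⟩
          have hge' : ¬ (s1 - (b - a) < a) := by omega
          have harg : s1 - (b - a) + (b - a) = s1 := by omega
          have hA' : cutA A a (b - a) (s1 - (b - a)) = A s1 := by
            simp only [cutA]
            rw [if_neg hge', harg]
          exact XF_of_eq hA' hs1
      obtain ⟨s1', hs1'lt2, hxs1'⟩ := hs1'lt
      exact ih (s2 - (b - a)) (by omega) (cutA A a (b - a)) hvalid' s1' hxs1' hxs2' hs1'lt2
    · exact ⟨A, hA, s1, s2, hs12, hsmall, hs1, hs2⟩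

/-! ### Section 4: a primitive recursive search for two output firings -/

abbrev A3 := ℕ × ℕ × ℕ
abbrev St := (ℕ × ℕ) × ℕ

structure SD where
  φ0 : ℕ → List (ℕ × ℕ)
  φ1 : ℕ → List (ℕ × ℕ)
  ψ0 : ℕ → Bool
  ψ1 : ℕ → Bool
  s01 : Bool
  s10 : Bool
  inp0 : Bool
  out0 : Bool
  x : ℕ
  i0 : ℕ
  i1 : ℕ

def cons3 (a : A3) : ℕ := if a.1 = 0 then 0 else a.2.1

def emit3 (a : A3) : ℕ := if a.1 = 1 then a.2.2 else 0

def xf3 (D : SD) (a : A3) : Bool := decide (a.1 = 1) && decide (a.2.2 = D.x)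

def actsL (L : List (ℕ × ℕ)) (m : Bool) (c : ℕ) : List A3 :=
  if L = [] ∧ m = false then [(0,0,0)]
  else (L.map fun bp => ((1:ℕ), bp.1, bp.2)) ++ (if m = true then [((2:ℕ), c, (0:ℕ))] else [])

def acts0 (D : SD) (c : ℕ) : List A3 := actsL (D.φ0 c) (D.ψ0 c) c

def acts1 (D : SD) (c : ℕ) : List A3 := actsL (D.φ1 c) (D.ψ1 c) c

def nexts (D : SD) (b : Bool) (a0 a1 : A3) (st : St) : St :=
  ((st.1.1 - cons3 a0 + cond D.s10 (emit3 a1) 0 + cond (D.inp0 && b) 1 0,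
    st.1.2 - cons3 a1 + cond D.s01 (emit3 a0) 0 + cond (!D.inp0 && b) 1 0),
   min 2 (st.2 + cond (cond D.out0 (xf3 D a0) (xf3 D a1)) 1 0))

def stepL (D : SD) (b : Bool) (st : St) : List St :=
  (acts0 D st.1.1).flatMap fun a0 => (acts1 D st.1.2).map fun a1 => nexts D b a0 a1 st

def frontier (D : SD) (w : List Bool) : ℕ → List St :=
  fun n => Nat.rec [((D.i0, D.i1), 0)] (fun t fr => fr.flatMap (stepL D (bitOf w t))) n

def TD (D : SD) (w : List Bool) : ℕ :=
  w.length + 2 * ((D.i0 + D.i1 + w.length + 1) * (D.i0 + D.i1 + w.length + 1))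

def Fdec (D : SD) (w : List Bool) : Bool :=
  (frontier D w (TD D w + 1)).foldr (fun st b => decide (st.2 = 2) || b) false

lemma frontier_zero (D : SD) (w : List Bool) :
    frontier D w 0 = [((D.i0, D.i1), 0)] := rfl

lemma frontier_succ (D : SD) (w : List Bool) (t : ℕ) :
    frontier D w (t + 1) = (frontier D w t).flatMap (stepL D (bitOf w t)) := rfl

/-! Primitive recursiveness -/

set_option maxHeartbeats 1000000 in
lemma actsF_primrec {φ : ℕ → List (ℕ × ℕ)} {ψ : ℕ → Bool}
    (hφ : Primrec φ) (hψ : Primrec ψ) :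
    Primrec fun c => actsL (φ c) (ψ c) c := by
  have hcond : PrimrecPred fun c => φ c = [] ∧ ψ c = false :=
    PrimrecPred.and (Primrec.eq.comp hφ (Primrec.const []))
      (Primrec.eq.comp hψ (Primrec.const false))
  have hmap : Primrec fun c => (φ c).map fun bp => ((1:ℕ), bp.1, bp.2) :=
    Primrec.list_map hφ ((Primrec.const 1).pair
      ((Primrec.fst.comp Primrec.snd).pair (Primrec.snd.comp Primrec.snd))).to₂
  have hsing : Primrec fun c => [((2:ℕ), c, (0:ℕ))] :=
    Primrec.list_cons.comp ((Primrec.const 2).pair (Primrec.id.pair (Primrec.const 0)))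
      (Primrec.const ([] : List A3))
  have hright : Primrec fun c => if ψ c = true then [((2:ℕ), c, (0:ℕ))] else [] :=
    Primrec.ite (Primrec.eq.comp hψ (Primrec.const true)) hsing (Primrec.const ([] : List A3))
  exact Primrec.ite hcond (Primrec.const ([((0:ℕ),(0:ℕ),(0:ℕ))] : List A3))
    (Primrec.list_append.comp hmap hright)

set_option maxHeartbeats 2000000 in
lemma Fdec_primrec (D : SD) (h0 : Primrec D.φ0) (h1 : Primrec D.φ1)
    (g0 : Primrec D.ψ0) (g1 : Primrec D.ψ1) : Primrec (Fdec D) := by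
  have hacts0 : Primrec (acts0 D) := actsF_primrec h0 g0
  have hacts1 : Primrec (acts1 D) := actsF_primrec h1 g1
  have hc3 : Primrec cons3 :=
    Primrec.ite (Primrec.eq.comp Primrec.fst (Primrec.const 0)) (Primrec.const 0)
      (Primrec.fst.comp Primrec.snd)
  have he3 : Primrec emit3 :=
    Primrec.ite (Primrec.eq.comp Primrec.fst (Primrec.const 1))
      (Primrec.snd.comp Primrec.snd) (Primrec.const 0)
  have hxf : Primrec (xf3 D) :=
    Primrec.and.comp (Primrec.beq.comp Primrec.fst (Primrec.const 1))
      (Primrec.beq.comp (Primrec.snd.comp Primrec.snd) (Primrec.const D.x))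
  -- nexts as a function of (b, a0, a1, st)
  have hnexts : Primrec fun z : Bool × A3 × A3 × St => nexts D z.1 z.2.1 z.2.2.1 z.2.2.2 := by
    have pb : Primrec fun z : Bool × A3 × A3 × St => z.1 := Primrec.fst
    have pa0 : Primrec fun z : Bool × A3 × A3 × St => z.2.1 := Primrec.fst.comp Primrec.snd
    have pa1 : Primrec fun z : Bool × A3 × A3 × St => z.2.2.1 :=
      Primrec.fst.comp (Primrec.snd.comp Primrec.snd)
    have pst : Primrec fun z : Bool × A3 × A3 × St => z.2.2.2 :=
      Primrec.snd.comp (Primrec.snd.comp Primrec.snd)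
    have p00 : Primrec fun z : Bool × A3 × A3 × St => z.2.2.2.1.1 :=
      Primrec.fst.comp (Primrec.fst.comp pst)
    have p01 : Primrec fun z : Bool × A3 × A3 × St => z.2.2.2.1.2 :=
      Primrec.snd.comp (Primrec.fst.comp pst)
    have pk : Primrec fun z : Bool × A3 × A3 × St => z.2.2.2.2 :=
      Primrec.snd.comp pst
    have hco1 : Primrec fun z : Bool × A3 × A3 × St =>
        z.2.2.2.1.1 - cons3 z.2.1 + cond D.s10 (emit3 z.2.2.1) 0 + cond (D.inp0 && z.1) 1 0 :=
      Primrec.nat_add.comp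
        (Primrec.nat_add.comp (Primrec.nat_sub.comp p00 (hc3.comp pa0))
          (Primrec.cond (Primrec.const D.s10) (he3.comp pa1) (Primrec.const 0)))
        (Primrec.cond (Primrec.and.comp (Primrec.const D.inp0) pb)
          (Primrec.const 1) (Primrec.const 0))
    have hco2 : Primrec fun z : Bool × A3 × A3 × St =>
        z.2.2.2.1.2 - cons3 z.2.2.1 + cond D.s01 (emit3 z.2.1) 0 + cond (!D.inp0 && z.1) 1 0 :=
      Primrec.nat_add.comp
        (Primrec.nat_add.comp (Primrec.nat_sub.comp p01 (hc3.comp pa1))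
          (Primrec.cond (Primrec.const D.s01) (he3.comp pa0) (Primrec.const 0)))
        (Primrec.cond (Primrec.and.comp (Primrec.const (!D.inp0)) pb)
          (Primrec.const 1) (Primrec.const 0))
    have hco3 : Primrec fun z : Bool × A3 × A3 × St =>
        min 2 (z.2.2.2.2 + cond (cond D.out0 (xf3 D z.2.1) (xf3 D z.2.2.1)) 1 0) :=
      Primrec.nat_min.comp (Primrec.const 2)
        (Primrec.nat_add.comp pk
          (Primrec.cond
            (Primrec.cond (Primrec.const D.out0) (hxf.comp pa0) (hxf.comp pa1))
            (Primrec.const 1) (Primrec.const 0)))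
    exact (hco1.pair hco2).pair hco3
  have hstep : Primrec₂ (stepL D) := by
    have hf : Primrec fun p : Bool × St => acts0 D p.2.1.1 :=
      hacts0.comp (Primrec.fst.comp (Primrec.fst.comp Primrec.snd))
    have hg : Primrec₂ fun (p : Bool × St) (a0 : A3) =>
        (acts1 D p.2.1.2).map fun a1 => nexts D p.1 a0 a1 p.2 := by
      have hf' : Primrec fun q : (Bool × St) × A3 => acts1 D q.1.2.1.2 :=
        hacts1.comp (Primrec.snd.comp (Primrec.fst.comp (Primrec.snd.comp Primrec.fst)))
      have hg' : Primrec₂ fun (q : (Bool × St) × A3) (a1 : A3) =>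
          nexts D q.1.1 q.2 a1 q.1.2 := by
        have := hnexts.comp (α := ((Bool × St) × A3) × A3)
          (((Primrec.fst.comp (Primrec.fst.comp Primrec.fst)).pair
            ((Primrec.snd.comp Primrec.fst).pair
              (Primrec.snd.pair (Primrec.snd.comp (Primrec.fst.comp Primrec.fst))))))
        exact this
      exact Primrec.list_map hf' hg'
    exact (Primrec.list_flatMap hf hg).to₂
  have hbit : Primrec₂ bitOf := Primrec.list_getD false
  have hT : Primrec fun w : List Bool => TD D w + 1 := by
    have hlen : Primrec fun w : List Bool => w.length := Primrec.list_length
    have hq : Primrec fun w : List Bool => D.i0 + D.i1 + w.length + 1 :=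
      Primrec.succ.comp (Primrec.nat_add.comp (Primrec.const (D.i0 + D.i1)) hlen)
    exact Primrec.succ.comp
      (Primrec.nat_add.comp hlen
        (Primrec.nat_mul.comp (Primrec.const 2) (Primrec.nat_mul.comp hq hq)))
  have hfront : Primrec fun w : List Bool => frontier D w (TD D w + 1) := by
    have hh : Primrec₂ fun (w : List Bool) (q : ℕ × List St) =>
        q.2.flatMap (stepL D (bitOf w q.1)) := by
      have hff : Primrec fun p : List Bool × (ℕ × List St) => p.2.2 :=
        Primrec.snd.comp Primrec.snd
      have hgg : Primrec₂ fun (p : List Bool × (ℕ × List St)) (st : St) =>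
          stepL D (bitOf p.1 p.2.1) st :=
        hstep.comp (hbit.comp (Primrec.fst.comp Primrec.fst)
          (Primrec.fst.comp (Primrec.snd.comp Primrec.fst))) Primrec.snd
      exact (Primrec.list_flatMap hff hgg).to₂
    exact Primrec.nat_rec' hT (Primrec.const [((D.i0, D.i1), 0)]) hh
  have hfold : Primrec₂ fun (_ : List Bool) (q : St × Bool) => decide (q.1.2 = 2) || q.2 :=
    (Primrec.or.comp
      (Primrec.beq.comp (Primrec.snd.comp (Primrec.fst.comp Primrec.snd)) (Primrec.const 2))
      (Primrec.snd.comp Primrec.snd))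
  exact Primrec.list_foldr hfront (Primrec.const false) hfold

/-! ### Section 5: correctness of the search -/

def act3 : Act → A3
  | none => (0,0,0)
  | some (Sum.inl r) => (1, r.b, r.p)
  | some (Sum.inr e) => (2, e, 0)

lemma cons3_act3 (a : Act) : cons3 (act3 a) = consumed a := by
  match a with
  | none => rfl
  | some (Sum.inl r) => rfl
  | some (Sum.inr e) => rfl

lemma emit3_act3 (a : Act) : emit3 (act3 a) = emitted a := by
  match a with
  | none => rfl
  | some (Sum.inl r) => rfl
  | some (Sum.inr e) => rfl

structure MatchD (D : SD) (P : SNP 2) (x : ℕ) : Prop where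
  hφ0 : ∀ c bp, bp ∈ D.φ0 c ↔ ∃ r : FireRule, FireApp P 0 r c ∧ bp = (r.b, r.p)
  hφ1 : ∀ c bp, bp ∈ D.φ1 c ↔ ∃ r : FireRule, FireApp P 1 r c ∧ bp = (r.b, r.p)
  hψ0 : ∀ c, D.ψ0 c = true ↔ c ∈ P.forget 0
  hψ1 : ∀ c, D.ψ1 c = true ↔ c ∈ P.forget 1
  hs01 : D.s01 = true ↔ ((0 : Fin 2), (1 : Fin 2)) ∈ P.syn
  hs10 : D.s10 = true ↔ ((1 : Fin 2), (0 : Fin 2)) ∈ P.syn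
  hinp : D.inp0 = true ↔ P.inp = 0
  hout : D.out0 = true ↔ P.out = 0
  hx : D.x = x
  hi0 : D.i0 = P.init 0
  hi1 : D.i1 = P.init 1

section ActsCorrect

variable (P : SNP 2) (i : Fin 2) (φ : ℕ → List (ℕ × ℕ)) (ψ : ℕ → Bool)
variable (hφ : ∀ c bp, bp ∈ φ c ↔ ∃ r : FireRule, FireApp P i r c ∧ bp = (r.b, r.p))
variable (hψ : ∀ c, ψ c = true ↔ c ∈ P.forget i)

include hφ hψ in
lemma acts_complete {c : ℕ} {a : Act} (h : ActValid P i c a) :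
    act3 a ∈ actsL (φ c) (ψ c) c := by
  match a with
  | none =>
    have hL : φ c = [] := List.eq_nil_iff_forall_not_mem.2 (fun bp hbp => by
      obtain ⟨r, hr, _⟩ := (hφ c bp).1 hbp
      exact h.1 r hr)
    have hm : ψ c = false := by
      cases hψc : ψ c
      · rfl
      · exact absurd ⟨(hψ c).1 hψc, rfl⟩ (h.2 c)
    rw [actsL, if_pos ⟨hL, hm⟩]
    exact List.mem_singleton.2 rfl
  | some (Sum.inl r) =>
    have hbp : (r.b, r.p) ∈ φ c := (hφ c _).2 ⟨r, h, rfl⟩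
    rw [actsL, if_neg (fun hc => (List.ne_nil_of_mem hbp) hc.1)]
    exact List.mem_append_left _ (List.mem_map.2 ⟨(r.b, r.p), hbp, rfl⟩)
  | some (Sum.inr e) =>
    obtain ⟨he, hce⟩ := h
    have hm : ψ c = true := (hψ c).2 (hce ▸ he)
    rw [actsL, if_neg (fun hc => by rw [hm] at hc; exact absurd hc.2 (by decide))]
    refine List.mem_append_right _ ?_
    rw [if_pos hm]
    refine List.mem_singleton.2 ?_
    show ((2:ℕ), e, (0:ℕ)) = ((2:ℕ), c, (0:ℕ))
    rw [hce]

include hφ hψ in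
lemma acts_sound {c : ℕ} {a3 : A3} (ha3 : a3 ∈ actsL (φ c) (ψ c) c) :
    ∃ a : Act, ActValid P i c a ∧ act3 a = a3 := by
  have hfire : ∀ a3' ∈ (φ c).map fun bp => ((1:ℕ), bp.1, bp.2),
      ∃ a : Act, ActValid P i c a ∧ act3 a = a3' := by
    intro a3' hleft
    obtain ⟨bp, hbp, heq⟩ := List.mem_map.1 hleft
    obtain ⟨r, hr, hbpr⟩ := (hφ c bp).1 hbp
    refine ⟨some (Sum.inl r), hr, ?_⟩
    rw [hbpr] at heq
    exact heq
  rw [actsL] at ha3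
  split_ifs at ha3 with hcase hm
  · obtain ⟨hL, hm⟩ := hcase
    have he : a3 = (0,0,0) := List.mem_singleton.1 ha3
    refine ⟨none, ⟨?_, ?_⟩, by rw [he]; rfl⟩
    · intro r hr
      have : (r.b, r.p) ∈ φ c := (hφ c _).2 ⟨r, hr, rfl⟩
      rw [hL] at this
      exact List.not_mem_nil this
    · intro e he2
      obtain ⟨hef, hce⟩ := he2
      have : ψ c = true := (hψ c).2 (hce ▸ hef)
      rw [hm] at this
      exact absurd this (by decide)
  · rcases List.mem_append.1 ha3 with hleft | hright
    · exact hfire a3 hleft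
    · have he : a3 = (2, c, 0) := List.mem_singleton.1 hright
      exact ⟨some (Sum.inr c), ⟨(hψ c).1 hm, rfl⟩, by rw [he]; rfl⟩
  · rw [List.append_nil] at ha3
    exact hfire a3 ha3

end ActsCorrect

lemma actsL_ne_nil (L : List (ℕ × ℕ)) (m : Bool) (c : ℕ) : actsL L m c ≠ [] := by
  rw [actsL]
  split_ifs with h hm
  · simp
  · intro hc
    rw [List.append_eq_nil_iff] at hc
    simp at hc
  · intro hc
    rw [List.append_nil, List.map_eq_nil_iff] at hc
    have hmf : m = false := by cases m; rfl; exact absurd rfl hm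
    exact h ⟨hc, hmf⟩

lemma xf3_act3 (D : SD) (x : ℕ) (hx : D.x = x) (a : Act) :
    (xf3 D (act3 a) = true) ↔ ∃ r : FireRule, a = some (Sum.inl r) ∧ r.p = x := by
  subst hx
  match a with
  | none => simp [xf3, act3]
  | some (Sum.inl r) => simp [xf3, act3]; exact ⟨of_decide_eq_true, decide_eq_true⟩
  | some (Sum.inr e) => simp [xf3, act3]

lemma fin2_cases (i : Fin 2) : i = 0 ∨ i = 1 := by
  fin_cases i
  · exact Or.inl rfl
  · exact Or.inr rfl

lemma nexts_act3 {D : SD} {P : SNP 2} {x : ℕ} (hWF : P.WF) (hM : MatchD D P x)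
    (a : Fin 2 → Act) (sp : Fin 2 → ℕ) (k : ℕ) (b : Bool) :
    nexts D b (act3 (a 0)) (act3 (a 1)) ((sp 0, sp 1), k) =
      ((nextSp P a sp b 0, nextSp P a sp b 1),
       min 2 (k + if (∃ r : FireRule, a P.out = some (Sum.inl r) ∧ r.p = x)
         then 1 else 0)) := by
  obtain ⟨hr0, hr1⟩ := received_eq hWF a
  have hc0 : cond D.s10 (emit3 (act3 (a 1))) 0 = received P a 0 := by
    rw [hr0, emit3_act3]
    cases hB : D.s10
    · rw [if_neg (fun hc => by rw [hM.hs10.2 hc] at hB; exact absurd hB (by decide))]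
      rfl
    · rw [if_pos (hM.hs10.1 hB)]
      rfl
  have hc1 : cond D.s01 (emit3 (act3 (a 0))) 0 = received P a 1 := by
    rw [hr1, emit3_act3]
    cases hB : D.s01
    · rw [if_neg (fun hc => by rw [hM.hs01.2 hc] at hB; exact absurd hB (by decide))]
      rfl
    · rw [if_pos (hM.hs01.1 hB)]
      rfl
  have hi0 : (cond (D.inp0 && b) 1 0 : ℕ) =
      if (0 : Fin 2) = P.inp ∧ b = true then 1 else 0 := by
    rw [Bool.cond_eq_ite]
    refine if_congr ?_ rfl rfl
    rw [Bool.and_eq_true]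
    constructor
    · rintro ⟨h1, h2⟩
      exact ⟨(hM.hinp.1 h1).symm, h2⟩
    · rintro ⟨h1, h2⟩
      exact ⟨hM.hinp.2 h1.symm, h2⟩
  have hi1 : (cond (!D.inp0 && b) 1 0 : ℕ) =
      if (1 : Fin 2) = P.inp ∧ b = true then 1 else 0 := by
    rw [Bool.cond_eq_ite]
    refine if_congr ?_ rfl rfl
    rw [Bool.and_eq_true, Bool.not_eq_true']
    constructor
    · rintro ⟨h1, h2⟩
      refine ⟨?_, h2⟩
      rcases fin2_cases P.inp with hP | hP
      · rw [hM.hinp.2 hP] at h1; exact absurd h1 (by simp)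
      · rw [hP]
    · rintro ⟨h1, h2⟩
      refine ⟨?_, h2⟩
      cases hB : D.inp0
      · rfl
      · exact absurd (h1.trans (hM.hinp.1 hB)) (by decide)
  have hk : (cond (cond D.out0 (xf3 D (act3 (a 0))) (xf3 D (act3 (a 1)))) 1 0 : ℕ) =
      if (∃ r : FireRule, a P.out = some (Sum.inl r) ∧ r.p = x) then 1 else 0 := by
    cases hB : D.out0
    · have hP : P.out = 1 := by
        rcases fin2_cases P.out with hP | hP
        · rw [hM.hout.2 hP] at hB; exact absurd hB (by simp)
        · exact hP
      show (cond (xf3 D (act3 (a 1))) 1 0 : ℕ) = _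
      rw [Bool.cond_eq_ite]
      exact if_congr (by rw [xf3_act3 D x hM.hx, hP]) rfl rfl
    · have hP : P.out = 0 := hM.hout.1 hB
      show (cond (xf3 D (act3 (a 0))) 1 0 : ℕ) = _
      rw [Bool.cond_eq_ite]
      exact if_congr (by rw [xf3_act3 D x hM.hx, hP]) rfl rfl
  show ((sp 0 - cons3 (act3 (a 0)) + _ + _, sp 1 - cons3 (act3 (a 1)) + _ + _), _) = _
  rw [cons3_act3, cons3_act3, hc0, hc1, hi0, hi1, hk]
  rfl

/-! ### Section 6: the search decides existence of two output firings -/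

lemma min_two_eq_zero : min 2 0 = 0 := rfl

lemma frontier_complete {D : SD} {P : SNP 2} {x : ℕ} (hWF : P.WF) (hM : MatchD D P x)
    {w : List Bool} {A : ℕ → Fin 2 → Act} (hA : ValidSeq P w A) :
    ∀ t, ((spSeq P w A t 0, spSeq P w A t 1), min 2 (cntX P x A t)) ∈ frontier D w t := by
  intro t
  induction t with
  | zero =>
    rw [frontier_zero]
    refine List.mem_singleton.2 ?_
    have hc : cntX P x A 0 = 0 := rfl
    rw [spSeq_zero, hM.hi0, hM.hi1, hc, min_two_eq_zero]
  | succ t ih =>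
    rw [frontier_succ]
    refine List.mem_flatMap.2 ⟨_, ih, ?_⟩
    have h0 := acts_complete P 0 D.φ0 D.ψ0 hM.hφ0 hM.hψ0 (hA t 0)
    have h1 := acts_complete P 1 D.φ1 D.ψ1 hM.hφ1 hM.hψ1 (hA t 1)
    refine List.mem_flatMap.2 ⟨act3 (A t 0), h0, List.mem_map.2 ⟨act3 (A t 1), h1, ?_⟩⟩
    rw [nexts_act3 hWF hM (A t) (spSeq P w A t) _ (bitOf w t)]
    have hit : (if (∃ r : FireRule, A t P.out = some (Sum.inl r) ∧ r.p = x) then 1 else 0) =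
        (if XF P x A t then 1 else 0) := rfl
    rw [hit, spSeq_succ, cntX_succ]
    have hle : (if XF P x A t then 1 else 0) ≤ 1 := by split_ifs <;> omega
    simp only [Prod.mk.injEq, true_and]
    omega

lemma frontier_sound {D : SD} {P : SNP 2} {x : ℕ} (hWF : P.WF) (hM : MatchD D P x)
    (w : List Bool) :
    ∀ t st, st ∈ frontier D w t →
      ∃ A, (∀ u, u < t → ∀ i, ActValid P i (spSeq P w A u i) (A u i)) ∧
        st = ((spSeq P w A t 0, spSeq P w A t 1), min 2 (cntX P x A t)) := by
  intro t
  induction t with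
  | zero =>
    intro st hst
    rw [frontier_zero] at hst
    refine ⟨fun _ _ => none, fun u hu => absurd hu (by omega), ?_⟩
    rw [List.mem_singleton.1 hst]
    have hc : cntX P x (fun _ _ => none) 0 = 0 := rfl
    rw [spSeq_zero, hM.hi0, hM.hi1, hc, min_two_eq_zero]
  | succ t ih =>
    intro st hst
    rw [frontier_succ] at hst
    obtain ⟨prev, hprev, hstep⟩ := List.mem_flatMap.1 hst
    obtain ⟨A, hval, hprev_eq⟩ := ih prev hprev
    subst hprev_eq
    obtain ⟨a30, ha30, hmap⟩ := List.mem_flatMap.1 hstep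
    obtain ⟨a31, ha31, hnx⟩ := List.mem_map.1 hmap
    have ha30' : a30 ∈ actsL (D.φ0 (spSeq P w A t 0)) (D.ψ0 (spSeq P w A t 0))
        (spSeq P w A t 0) := ha30
    have ha31' : a31 ∈ actsL (D.φ1 (spSeq P w A t 1)) (D.ψ1 (spSeq P w A t 1))
        (spSeq P w A t 1) := ha31
    obtain ⟨a0, hv0, he0⟩ := acts_sound P 0 D.φ0 D.ψ0 hM.hφ0 hM.hψ0 ha30'
    obtain ⟨a1, hv1, he1⟩ := acts_sound P 1 D.φ1 D.ψ1 hM.hφ1 hM.hψ1 ha31'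
    classical
    set A' : ℕ → Fin 2 → Act :=
      fun u => if u = t then (fun i : Fin 2 => if i = 0 then a0 else a1) else A u with hA'def
    have hAu : ∀ u, u < t → A' u = A u := fun u hu => if_neg (by omega)
    have hsp' : ∀ u, u ≤ t → spSeq P w A' u = spSeq P w A u :=
      fun u hu => spSeq_congr (fun v hv => hAu v (by omega))
    have hcnt' : cntX P x A' t = cntX P x A t := (cntX_congr P x (fun u hu => hAu u hu))
    have hA't : A' t = fun i : Fin 2 => if i = 0 then a0 else a1 := if_pos rfl
    have hA't0 : A' t 0 = a0 := by rw [hA't]; exact if_pos rfl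
    have hA't1 : A' t 1 = a1 := by rw [hA't]; exact if_neg (by decide)
    refine ⟨A', ?_, ?_⟩
    · intro u hu i
      rcases Nat.lt_or_ge u t with h | h
      · rw [hsp' u (by omega), hAu u h]
        exact hval u h i
      · have hut : u = t := by omega
        subst hut
        rw [hsp' u (le_refl u)]
        rcases fin2_cases i with hi | hi <;> rw [hi]
        · rw [hA't0]; exact hv0
        · rw [hA't1]; exact hv1
    · rw [← hnx, ← he0, ← he1, ← hA't0, ← hA't1]
      have hrw0 : spSeq P w A t 0 = spSeq P w A' t 0 := by rw [hsp' t (le_refl t)]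
      have hrw1 : spSeq P w A t 1 = spSeq P w A' t 1 := by rw [hsp' t (le_refl t)]
      rw [hrw0, hrw1, ← hcnt']
      rw [nexts_act3 hWF hM (A' t) (spSeq P w A' t) _ (bitOf w t)]
      have hit : (if (∃ r : FireRule, A' t P.out = some (Sum.inl r) ∧ r.p = x) then 1 else 0) =
          (if XF P x A' t then 1 else 0) := rfl
      rw [hit, spSeq_succ, cntX_succ]
      have hle : (if XF P x A' t then 1 else 0) ≤ 1 := by split_ifs <;> omega
      simp only [Prod.mk.injEq, true_and]
      omega

lemma stepL_ne_nil (D : SD) (b : Bool) (st : St) : stepL D b st ≠ [] := by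
  obtain ⟨a0, ha0⟩ := List.exists_mem_of_ne_nil (acts0 D st.1.1) (actsL_ne_nil _ _ _)
  obtain ⟨a1, ha1⟩ := List.exists_mem_of_ne_nil (acts1 D st.1.2) (actsL_ne_nil _ _ _)
  exact List.ne_nil_of_mem
    (List.mem_flatMap.2 ⟨a0, ha0, List.mem_map.2 ⟨a1, ha1, rfl⟩⟩)

lemma frontier_persist (D : SD) (w : List Bool) {t : ℕ} {st : St}
    (hst : st ∈ frontier D w t) (h2 : st.2 = 2) :
    ∀ T, t ≤ T → ∃ st', st' ∈ frontier D w T ∧ st'.2 = 2 := by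
  intro T hT
  induction T, hT using Nat.le_induction with
  | base => exact ⟨st, hst, h2⟩
  | succ T hT ihT =>
    obtain ⟨st', hst', h2'⟩ := ihT
    obtain ⟨a0, ha0⟩ := List.exists_mem_of_ne_nil (acts0 D st'.1.1) (actsL_ne_nil _ _ _)
    obtain ⟨a1, ha1⟩ := List.exists_mem_of_ne_nil (acts1 D st'.1.2) (actsL_ne_nil _ _ _)
    refine ⟨nexts D (bitOf w T) a0 a1 st', ?_, ?_⟩
    · rw [frontier_succ]
      exact List.mem_flatMap.2 ⟨st', hst', List.mem_flatMap.2
        ⟨a0, ha0, List.mem_map.2 ⟨a1, ha1, rfl⟩⟩⟩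
    · show min 2 (st'.2 + cond (cond D.out0 (xf3 D a0) (xf3 D a1)) 1 0) = 2
      rw [h2']
      omega

lemma Fdec_iff {D : SD} {P : SNP 2} {x : ℕ} (hWF : P.WF) (hM : MatchD D P x)
    (w : List Bool) :
    Fdec D w = true ↔
      ∃ A, ValidSeq P w A ∧ ∃ t1 t2, t1 < t2 ∧ XF P x A t1 ∧ XF P x A t2 := by
  have hTD : TD D w = Tb P w := by rw [TD, Tb, Nb, hM.hi0, hM.hi1, pow_two]
  rw [Fdec, foldr_or (fun st : St => decide (st.2 = 2))]
  constructor
  · rintro ⟨st, hst, hdec⟩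
    rw [decide_eq_true_iff] at hdec
    obtain ⟨A, hval, hsteq⟩ := frontier_sound hWF hM w (TD D w + 1) st hst
    have hcnt2 : 2 ≤ cntX P x A (TD D w + 1) := by
      rw [hsteq] at hdec
      simp only at hdec
      omega
    obtain ⟨u1, u2, h12, h2lt, hx1, hx2⟩ := cntX_two P x A hcnt2
    obtain ⟨A', hA', heq⟩ := extend_valid P w A (TD D w + 1) hval
    exact ⟨A', hA', u1, u2, h12, XF_of_eq (heq u1 (by omega)) hx1,
      XF_of_eq (heq u2 (by omega)) hx2⟩
  · rintro ⟨A, hA, t1, t2, h12, hx1, hx2⟩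
    obtain ⟨A', hA', s1, s2, hs12, hsT, hxs1, hxs2⟩ := pump P x hWF w t2 A hA t1 hx1 hx2 h12
    have hcnt : 2 ≤ cntX P x A' (s2 + 1) := cntX_ge_two P x A' hs12 hxs1 hxs2
    have hmem := frontier_complete hWF hM hA' (s2 + 1)
    have hk : ((spSeq P w A' (s2+1) 0, spSeq P w A' (s2+1) 1),
        min 2 (cntX P x A' (s2+1))).2 = 2 := by
      simp only
      omega
    obtain ⟨st', hst', h2'⟩ :=
      frontier_persist D w hmem hk (TD D w + 1) (by rw [hTD]; omega)
    exact ⟨st', hst', decide_eq_true h2'⟩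

/-! ### Section 7: building the system data -/

lemma exists_phiList (P : SNP 2) (i : Fin 2) (l : List FireRule)
    (hl : ∀ r, r ∈ l ↔ r ∈ P.fire i) :
    ∃ φ : ℕ → List (ℕ × ℕ), Primrec φ ∧
      ∀ c bp, bp ∈ φ c ↔ ∃ r : FireRule, FireApp P i r c ∧ bp = (r.b, r.p) := by
  suffices h : ∃ φ : ℕ → List (ℕ × ℕ), Primrec φ ∧
      ∀ c bp, bp ∈ φ c ↔ ∃ r ∈ l, (r.b ≤ c ∧ spk c ∈ r.E.matches') ∧ bp = (r.b, r.p) by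
    obtain ⟨φ, h1, h2⟩ := h
    refine ⟨φ, h1, fun c bp => ?_⟩
    rw [h2 c bp]
    constructor
    · rintro ⟨r, hrl, happ, he⟩
      exact ⟨r, ⟨(hl r).1 hrl, happ.1, happ.2⟩, he⟩
    · rintro ⟨r, ⟨hrf, ha1, ha2⟩, he⟩
      exact ⟨r, (hl r).2 hrf, ⟨ha1, ha2⟩, he⟩
  clear hl
  induction l with
  | nil => exact ⟨fun _ => [], Primrec.const [], by simp⟩
  | cons r l ihl =>
    obtain ⟨φ, hφp, hφs⟩ := ihl
    obtain ⟨f, hfp, hfs⟩ := regex_charfun r.E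
    refine ⟨fun c => (if r.b ≤ c ∧ f c = true then [(r.b, r.p)] else []) ++ φ c, ?_, ?_⟩
    · refine Primrec.list_append.comp ?_ hφp
      refine Primrec.ite ?_ (Primrec.const [(r.b, r.p)]) (Primrec.const ([] : List (ℕ × ℕ)))
      exact PrimrecPred.and (Primrec.nat_le.comp (Primrec.const r.b) Primrec.id)
        (Primrec.eq.comp hfp (Primrec.const true))
    · intro c bp
      rw [List.mem_append]
      constructor
      · rintro (hin | hin)
        · split_ifs at hin with hc
          · exact ⟨r, List.mem_cons_self, ⟨hc.1, (hfs c).1 hc.2⟩, List.mem_singleton.1 hin⟩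
          · exact absurd hin List.not_mem_nil
        · obtain ⟨r', hr', ha, he⟩ := (hφs c bp).1 hin
          exact ⟨r', List.mem_cons_of_mem _ hr', ha, he⟩
      · rintro ⟨r', hr', ⟨hb, hsp⟩, he⟩
        rcases List.mem_cons.1 hr' with heq | hmem
        · subst heq
          left
          rw [if_pos ⟨hb, (hfs c).2 hsp⟩]
          exact List.mem_singleton.2 he
        · right
          exact (hφs c bp).2 ⟨r', hmem, ⟨hb, hsp⟩, he⟩

lemma exists_psiList (P : SNP 2) (i : Fin 2) (m : List ℕ)
    (hm : ∀ e, e ∈ m ↔ e ∈ P.forget i) :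
    ∃ ψ : ℕ → Bool, Primrec ψ ∧ ∀ c, (ψ c = true ↔ c ∈ P.forget i) := by
  suffices h : ∃ ψ : ℕ → Bool, Primrec ψ ∧ ∀ c, (ψ c = true ↔ c ∈ m) by
    obtain ⟨ψ, h1, h2⟩ := h
    exact ⟨ψ, h1, fun c => by rw [h2 c, hm c]⟩
  clear hm
  induction m with
  | nil => exact ⟨fun _ => false, Primrec.const false, by simp⟩
  | cons e m ihm =>
    obtain ⟨ψ, hψp, hψs⟩ := ihm
    refine ⟨fun c => decide (c = e) || ψ c, ?_, fun c => ?_⟩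
    · exact Primrec.or.comp (Primrec.eq.comp Primrec.id (Primrec.const e)).decide hψp
    · rw [Bool.or_eq_true, decide_eq_true_iff, hψs c, List.mem_cons]

/-- There is no universal extended SN P system without delay
having only 2 neurons, even with generalised input and generalised output. -/
theorem no_universal_two_neuron_SNP :
    ¬ ∃ (P : SNP 2) (x : ℕ), P.WF ∧ UniversalVia P (GenOutputs P x) := by
  rintro ⟨P, x, hWF, f, g, hf, hg, hspec⟩
  classical
  -- extract finite rule data as lists
  have hl0 : ∀ r : FireRule, r ∈ (hWF.2.1 0).toFinset.toList ↔ r ∈ P.fire 0 :=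
    fun r => by rw [Finset.mem_toList, Set.Finite.mem_toFinset]
  have hl1 : ∀ r : FireRule, r ∈ (hWF.2.1 1).toFinset.toList ↔ r ∈ P.fire 1 :=
    fun r => by rw [Finset.mem_toList, Set.Finite.mem_toFinset]
  have hm0 : ∀ e : ℕ, e ∈ (hWF.2.2.1 0).toFinset.toList ↔ e ∈ P.forget 0 :=
    fun e => by rw [Finset.mem_toList, Set.Finite.mem_toFinset]
  have hm1 : ∀ e : ℕ, e ∈ (hWF.2.2.1 1).toFinset.toList ↔ e ∈ P.forget 1 :=
    fun e => by rw [Finset.mem_toList, Set.Finite.mem_toFinset]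
  obtain ⟨φ0, hφ0p, hφ0s⟩ := exists_phiList P 0 _ hl0
  obtain ⟨φ1, hφ1p, hφ1s⟩ := exists_phiList P 1 _ hl1
  obtain ⟨ψ0, hψ0p, hψ0s⟩ := exists_psiList P 0 _ hm0
  obtain ⟨ψ1, hψ1p, hψ1s⟩ := exists_psiList P 1 _ hm1
  set D : SD := ⟨φ0, φ1, ψ0, ψ1,
    decide (((0 : Fin 2), (1 : Fin 2)) ∈ P.syn),
    decide (((1 : Fin 2), (0 : Fin 2)) ∈ P.syn),
    decide (P.inp = 0), decide (P.out = 0), x, P.init 0, P.init 1⟩ with hD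
  have hM : MatchD D P x :=
    ⟨hφ0s, hφ1s, hψ0s, hψ1s, decide_eq_true_iff, decide_eq_true_iff,
      decide_eq_true_iff, decide_eq_true_iff, rfl, rfl, rfl⟩
  -- the key equivalence: halting is decided by `Fdec D`
  have key : ∀ (x0 : ℕ) (v : List ℕ),
      (phi x0 v).Dom ↔ (Fdec D (g (x0, v)) = true) := by
    intro x0 v
    rw [Fdec_iff hWF hM]
    constructor
    · intro hdom
      obtain ⟨z, hz⟩ := (hspec x0 v).2 hdom
      obtain ⟨ρ, t1, t2, h12, hF1, hF2, _, _⟩ := hz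
      exact ⟨ρ.act, run_valid ρ, t1, t2, h12, hF1, hF2⟩
    · rintro ⟨A, hA, t1, t2, h12, hx1, hx2⟩
      obtain ⟨ρ, hρ⟩ := seq_run hA
      have hSend : ∀ t, XF P x A t → SendsAt ρ t x := by
        intro t h
        obtain ⟨r, hr, hp⟩ := h
        exact ⟨r, by rw [hρ]; exact hr, hp⟩
      have hEx : ∃ t, SendsAt ρ t x := ⟨t1, hSend t1 hx1⟩
      have hT1 : SendsAt ρ (Nat.find hEx) x := Nat.find_spec hEx
      have hT1le : Nat.find hEx ≤ t1 := Nat.find_min' hEx (hSend t1 hx1)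
      have hEx2 : ∃ t, SendsAt ρ t x ∧ Nat.find hEx < t :=
        ⟨t2, hSend t2 hx2, by omega⟩
      obtain ⟨hT2, hT12⟩ := Nat.find_spec hEx2
      have hOut : GenOutputs P x (g (x0, v)) (Nat.find hEx2 - Nat.find hEx) := by
        refine ⟨ρ, Nat.find hEx, Nat.find hEx2, hT12, hT1, hT2, ?_, rfl⟩
        intro s hs hne hFs
        rcases Nat.lt_trichotomy s (Nat.find hEx) with h | h | h
        · exact Nat.find_min hEx h hFs
        · exact hne h
        · exact Nat.find_min hEx2 hs ⟨hFs, h⟩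
      have := (hspec x0 v).1 _ hOut
      rw [this]
      exact Part.some_dom _
  -- computability of the halting problem: contradiction
  have hcomp : ComputablePred
      fun c : Nat.Partrec.Code =>
        (Nat.Partrec.Code.eval c (Encodable.encode ([] : List ℕ))).Dom := by
    refine ⟨fun c => Classical.propDecidable _, ?_⟩
    have hcoded : Computable fun c : Nat.Partrec.Code =>
        Fdec D (g (Encodable.encode c, [])) :=
      (Fdec_primrec D hφ0p hφ1p hψ0p hψ1p).to_comp.comp
        (hg.comp (Computable.encode.pair (Computable.const [])))
    refine hcoded.of_eq ?_
    intro c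
    have hphi : phi (Encodable.encode c) [] =
        Nat.Partrec.Code.eval c (Encodable.encode ([] : List ℕ)) := by
      rw [phi, Denumerable.ofNat_encode]
    have hiff : (Nat.Partrec.Code.eval c (Encodable.encode ([] : List ℕ))).Dom ↔
        Fdec D (g (Encodable.encode c, [])) = true := by
      rw [← hphi]
      exact key (Encodable.encode c) []
    by_cases hd : (Nat.Partrec.Code.eval c (Encodable.encode ([] : List ℕ))).Dom
    · rw [hiff.1 hd]
      exact (decide_eq_true hd).symm
    · have hF : Fdec D (g (Encodable.encode c, [])) = false := by
        cases hFc : Fdec D (g (Encodable.encode c, []))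
        · rfl
        · exact absurd (hiff.2 hFc) hd
      rw [hF]
      exact (decide_eq_false hd).symm
  exact ComputablePred.halting_problem (Encodable.encode ([] : List ℕ)) hcomp


end PaperSNP
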